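/- For any two stationary stochastic policies π and π' in an infinite-horizon MDP M with discount factor γ < 1 and bounded rewards, the expected cumulative discounted rewards are related through the advantage function of π evaluated along trajectories of π': η(π', M) = η(π, M) + E_{τ ~ π'}[ ∑_{i=0}^∞ γ^i A_π(s_i, a_i) ]. -/

import Mathlib

/-
STATEMENT 2 (performance difference identity): For any two stationary stochastic policies
π and π' in an infinite-horizon MDP M with discount factor γ < 1 and bounded rewards,
η(π', M) = η(π, M) + E_{τ ~ π'}[ ∑_{i=0}^∞ γ^i A_π(s_i, a_i) ].
Here A_π(s, a) = Q_π(s, a) − V_π(s), with Q_π(s,a) = r(s,a) + γ ∑_{s'} P(s'|s,a) V_π(s')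
and V_π the (unique, since γ < 1) solution of the Bellman equation for π.  The expectation
over trajectories of π' unfolds as ∑_i γ^i E_{s_i ~ P(s_i=·|π'), a_i ~ π'(s_i)}[A_π(s_i,a_i)].
-/

noncomputable section

/-- `stateDist P μ π i s` is `P(s_i = s | π)`. -/
def stateDist {S A : Type*} [Fintype S] [Fintype A]
    (P : S → A → S → ℝ) (μ : S → ℝ) (π : S → A → ℝ) : ℕ → S → ℝ
  | 0 => μ
  | i + 1 => fun s' => ∑ s, ∑ a, stateDist P μ π i s * π s a * P s a s'

/-- `η(π, M) = E_{τ ~ π}[ ∑_{i=0}^∞ γ^i r(s_i, a_i) ]`, the expected cumulative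
discounted reward of policy `π`. -/
def eta {S A : Type*} [Fintype S] [Fintype A] (γ : ℝ)
    (P : S → A → S → ℝ) (r : S → A → ℝ) (μ : S → ℝ) (π : S → A → ℝ) : ℝ :=
  ∑' i : ℕ, γ ^ i * ∑ s, stateDist P μ π i s * ∑ a, π s a * r s a

/-- The Q-function of `π` expressed through its value function `V`:
`Q_π(s, a) = r(s,a) + γ ∑_{s'} P(s'|s,a) V_π(s')`. -/
def Qfun {S A : Type*} [Fintype S] (γ : ℝ)
    (P : S → A → S → ℝ) (r : S → A → ℝ) (V : S → ℝ) (s : S) (a : A) : ℝ :=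
  r s a + γ * ∑ s', P s a s' * V s'

lemma stateDist_prob {S A : Type*} [Fintype S] [Fintype A]
    (P : S → A → S → ℝ) (hP : ∀ s a, (∀ s', 0 ≤ P s a s') ∧ ∑ s', P s a s' = 1)
    (μ : S → ℝ) (hμ : (∀ s, 0 ≤ μ s) ∧ ∑ s, μ s = 1)
    (p : S → A → ℝ) (hp : ∀ s, (∀ a, 0 ≤ p s a) ∧ ∑ a, p s a = 1) :
    ∀ i, (∀ s, 0 ≤ stateDist P μ p i s) ∧ ∑ s, stateDist P μ p i s = 1 := by
  intro i
  induction i with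
  | zero => exact hμ
  | succ n ih =>
    refine ⟨fun s' => ?_, ?_⟩
    · exact Finset.sum_nonneg fun s _ => Finset.sum_nonneg fun a _ =>
        mul_nonneg (mul_nonneg (ih.1 s) ((hp s).1 a)) ((hP s a).1 s')
    · show ∑ s', ∑ s, ∑ a, stateDist P μ p n s * p s a * P s a s' = 1
      rw [Finset.sum_comm]
      have : ∀ s, ∑ s', ∑ a, stateDist P μ p n s * p s a * P s a s'
          = stateDist P μ p n s := by
        intro s
        rw [Finset.sum_comm]
        have : ∀ a, ∑ s', stateDist P μ p n s * p s a * P s a s'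
            = stateDist P μ p n s * p s a := by
          intro a
          rw [← Finset.mul_sum, (hP s a).2, mul_one]
        simp only [this, ← Finset.mul_sum, (hp s).2, mul_one]
      simp only [this, ih.2]

lemma stateDist_succ_sum {S A : Type*} [Fintype S] [Fintype A]
    (P : S → A → S → ℝ) (μ : S → ℝ) (p : S → A → ℝ) (V : S → ℝ) (i : ℕ) :
    ∑ s', stateDist P μ p (i+1) s' * V s'
      = ∑ s, stateDist P μ p i s * ∑ a, p s a * ∑ s', P s a s' * V s' := by
  show ∑ s', (∑ s, ∑ a, stateDist P μ p i s * p s a * P s a s') * V s' = _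
  simp only [Finset.sum_mul, Finset.mul_sum]
  rw [Finset.sum_comm]
  refine Finset.sum_congr rfl fun s _ => ?_
  rw [Finset.sum_comm]
  refine Finset.sum_congr rfl fun a _ => Finset.sum_congr rfl fun s' _ => ?_
  ring

theorem performance_difference
    {S A : Type*} [Fintype S] [Fintype A]
    (γ : ℝ) (hγ0 : 0 ≤ γ) (hγ1 : γ < 1)
    -- probabilistic state dynamics
    (P : S → A → S → ℝ) (hP : ∀ s a, (∀ s', 0 ≤ P s a s') ∧ ∑ s', P s a s' = 1)
    -- (bounded) reward function
    (r : S → A → ℝ)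
    -- initial state distribution
    (μ : S → ℝ) (hμ : (∀ s, 0 ≤ μ s) ∧ ∑ s, μ s = 1)
    -- two stationary stochastic policies
    (π π' : S → A → ℝ)
    (hπ : ∀ s, (∀ a, 0 ≤ π s a) ∧ ∑ a, π s a = 1)
    (hπ' : ∀ s, (∀ a, 0 ≤ π' s a) ∧ ∑ a, π' s a = 1)
    -- V is the value function of π: V_π(s) = E_{τ~π}[∑ γ^i r | s_0 = s], i.e. the
    -- solution of the Bellman equation V_π(s) = E_{a ~ π(s)}[Q_π(s, a)]
    (V : S → ℝ) (hV : ∀ s, V s = ∑ a, π s a * Qfun γ P r V s a) :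
    eta γ P r μ π'
      = eta γ P r μ π
        + ∑' i : ℕ, γ ^ i * ∑ s, stateDist P μ π' i s *
            ∑ a, π' s a * (Qfun γ P r V s a - V s) := by
  -- abbreviations
  set F : (S → A → ℝ) → ℕ → ℝ :=
    fun p i => γ ^ i * ∑ s, stateDist P μ p i s * V s with hF
  set R : (S → A → ℝ) → ℕ → ℝ :=
    fun p i => γ ^ i * ∑ s, stateDist P μ p i s * ∑ a, p s a * r s a with hR
  set Adv : ℕ → ℝ :=
    fun i => γ ^ i * ∑ s, stateDist P μ π' i s *
      ∑ a, π' s a * (Qfun γ P r V s a - V s) with hAdv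
  -- bounds
  set CV : ℝ := ∑ s, |V s| with hCV
  set Cr : ℝ := ∑ s, ∑ a, |r s a| with hCr
  have dist_le_one : ∀ (p : S → A → ℝ), (∀ s, (∀ a, 0 ≤ p s a) ∧ ∑ a, p s a = 1) →
      ∀ i s, stateDist P μ p i s ≤ 1 := by
    intro p hp i s
    have h := stateDist_prob P hP μ hμ p hp i
    calc stateDist P μ p i s ≤ ∑ s', stateDist P μ p i s' :=
          Finset.single_le_sum (fun s' _ => h.1 s') (Finset.mem_univ s)
      _ = 1 := h.2
  have dist_nonneg : ∀ (p : S → A → ℝ), (∀ s, (∀ a, 0 ≤ p s a) ∧ ∑ a, p s a = 1) →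
      ∀ i s, 0 ≤ stateDist P μ p i s := fun p hp i s => (stateDist_prob P hP μ hμ p hp i).1 s
  have weight_bound : ∀ (p : S → A → ℝ), (∀ s, (∀ a, 0 ≤ p s a) ∧ ∑ a, p s a = 1) →
      ∀ i (g : S → ℝ), |∑ s, stateDist P μ p i s * g s| ≤ ∑ s, |g s| := by
    intro p hp i g
    calc |∑ s, stateDist P μ p i s * g s| ≤ ∑ s, |stateDist P μ p i s * g s| :=
          Finset.abs_sum_le_sum_abs _ _
      _ ≤ ∑ s, |g s| := by
          refine Finset.sum_le_sum fun s _ => ?_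
          rw [abs_mul, abs_of_nonneg (dist_nonneg p hp i s)]
          calc stateDist P μ p i s * |g s| ≤ 1 * |g s| :=
                mul_le_mul_of_nonneg_right (dist_le_one p hp i s) (abs_nonneg _)
            _ = |g s| := one_mul _
  -- |F p i| ≤ CV * γ^i, |R p i| ≤ Cr * γ^i
  have hFbound : ∀ (p : S → A → ℝ), (∀ s, (∀ a, 0 ≤ p s a) ∧ ∑ a, p s a = 1) →
      ∀ i, |F p i| ≤ CV * γ ^ i := by
    intro p hp i
    rw [hF]
    simp only [abs_mul, abs_pow, abs_of_nonneg hγ0]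
    rw [mul_comm CV]
    exact mul_le_mul_of_nonneg_left (weight_bound p hp i V) (pow_nonneg hγ0 i)
  have hRbound : ∀ (p : S → A → ℝ), (∀ s, (∀ a, 0 ≤ p s a) ∧ ∑ a, p s a = 1) →
      ∀ i, |R p i| ≤ Cr * γ ^ i := by
    intro p hp i
    rw [hR]
    simp only [abs_mul, abs_pow, abs_of_nonneg hγ0]
    rw [mul_comm Cr]
    refine mul_le_mul_of_nonneg_left ?_ (pow_nonneg hγ0 i)
    refine le_trans (weight_bound p hp i _) (Finset.sum_le_sum fun s _ => ?_)
    calc |∑ a, p s a * r s a| ≤ ∑ a, |p s a * r s a| := Finset.abs_sum_le_sum_abs _ _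
      _ ≤ ∑ a, |r s a| := by
          refine Finset.sum_le_sum fun a _ => ?_
          rw [abs_mul, abs_of_nonneg ((hp s).1 a)]
          have h1 : p s a ≤ 1 := by
            calc p s a ≤ ∑ a', p s a' :=
                  Finset.single_le_sum (fun a' _ => (hp s).1 a') (Finset.mem_univ a)
              _ = 1 := (hp s).2
          calc p s a * |r s a| ≤ 1 * |r s a| :=
                mul_le_mul_of_nonneg_right h1 (abs_nonneg _)
            _ = |r s a| := one_mul _
  have geo : Summable (fun i : ℕ => γ ^ i) := summable_geometric_of_lt_one hγ0 hγ1
  have sumgeo : ∀ C : ℝ, Summable (fun i : ℕ => C * γ ^ i) := fun C => geo.mul_left C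
  have hRsummable : ∀ (p : S → A → ℝ), (∀ s, (∀ a, 0 ≤ p s a) ∧ ∑ a, p s a = 1) →
      Summable (R p) := by
    intro p hp
    exact Summable.of_norm_bounded (sumgeo Cr) (fun i => hRbound p hp i)
  -- F p tends to 0
  have hFtend : ∀ (p : S → A → ℝ), (∀ s, (∀ a, 0 ≤ p s a) ∧ ∑ a, p s a = 1) →
      Filter.Tendsto (F p) Filter.atTop (nhds 0) := by
    intro p hp
    refine squeeze_zero_norm (fun i => hFbound p hp i) ?_
    have : Filter.Tendsto (fun i : ℕ => γ ^ i) Filter.atTop (nhds 0) :=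
      tendsto_pow_atTop_nhds_zero_of_lt_one hγ0 hγ1
    simpa using this.const_mul CV
  -- recursion for F p via stateDist_succ_sum
  have hFstep : ∀ (p : S → A → ℝ) i,
      F p (i + 1) = γ ^ i * ∑ s, stateDist P μ p i s *
        ∑ a, p s a * (γ * ∑ s', P s a s' * V s') := by
    intro p i
    rw [hF]
    show γ ^ (i+1) * ∑ s', stateDist P μ p (i+1) s' * V s' = _
    rw [stateDist_succ_sum P μ p V i, pow_succ]
    simp only [Finset.mul_sum]
    exact Finset.sum_congr rfl fun s _ => Finset.sum_congr rfl fun a _ =>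
      Finset.sum_congr rfl fun s' _ => by ring
  -- Bellman recursion: F π i = R π i + F π (i+1)
  have hπrec : ∀ i, F π i = R π i + F π (i + 1) := by
    intro i
    rw [hFstep π i, hR, hF]
    show γ ^ i * ∑ s, stateDist P μ π i s * V s = _
    rw [← mul_add, ← Finset.sum_add_distrib]
    congr 1
    refine Finset.sum_congr rfl fun s _ => ?_
    rw [← mul_add]
    congr 1
    rw [hV s, ← Finset.sum_add_distrib]
    refine Finset.sum_congr rfl fun a _ => ?_
    rw [Qfun, mul_add]
  -- Advantage identity: Adv i = R π' i + F π' (i+1) - F π' i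
  have hadvrec : ∀ i, Adv i = R π' i + F π' (i + 1) - F π' i := by
    intro i
    rw [hAdv, hFstep π' i, hR, hF]
    have expand : ∀ s, ∑ a, π' s a * (Qfun γ P r V s a - V s)
        = (∑ a, π' s a * r s a) + (∑ a, π' s a * (γ * ∑ s', P s a s' * V s')) - V s := by
      intro s
      have : ∑ a, π' s a * (Qfun γ P r V s a - V s)
          = ∑ a, (π' s a * r s a + π' s a * (γ * ∑ s', P s a s' * V s') - π' s a * V s) := by
        refine Finset.sum_congr rfl fun a _ => ?_
        rw [Qfun]; ring
      rw [this, Finset.sum_sub_distrib, Finset.sum_add_distrib, ← Finset.sum_mul, (hπ' s).2,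
        one_mul]
    simp only [expand]
    have : ∀ s, stateDist P μ π' i s *
        ((∑ a, π' s a * r s a) + (∑ a, π' s a * (γ * ∑ s', P s a s' * V s')) - V s)
        = stateDist P μ π' i s * (∑ a, π' s a * r s a)
          + stateDist P μ π' i s * (∑ a, π' s a * (γ * ∑ s', P s a s' * V s'))
          - stateDist P μ π' i s * V s := fun s => by ring
    simp only [this, Finset.sum_sub_distrib, Finset.sum_add_distrib]
    ring
  -- eta π = F π 0 via telescoping
  have hRsumπ : Summable (R π) := hRsummable π hπ
  have hEtaπ : eta γ P r μ π = F π 0 := by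
    have hpartial : ∀ n, ∑ i ∈ Finset.range n, R π i = F π 0 - F π n := by
      intro n
      induction n with
      | zero => simp
      | succ m ih =>
        rw [Finset.sum_range_succ, ih]
        have := hπrec m
        linarith
    have : Filter.Tendsto (fun n => ∑ i ∈ Finset.range n, R π i)
        Filter.atTop (nhds (F π 0)) := by
      simp only [hpartial]
      have := (hFtend π hπ).const_sub (F π 0)
      simpa using this
    have hs : HasSum (R π) (F π 0) := (hRsumπ.hasSum_iff_tendsto_nat).mpr this
    exact hs.tsum_eq
  -- telescoping sum for π'
  have htele : HasSum (fun i => F π' (i + 1) - F π' i) (0 - F π' 0) := by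
    have hsummable : Summable (fun i => F π' (i + 1) - F π' i) := by
      refine Summable.of_norm_bounded (sumgeo (CV * γ + CV)) (fun i => ?_)
      have h1 := hFbound π' hπ' (i + 1)
      have h2 := hFbound π' hπ' i
      calc ‖F π' (i + 1) - F π' i‖ ≤ |F π' (i + 1)| + |F π' i| := abs_sub _ _
        _ ≤ CV * γ ^ (i + 1) + CV * γ ^ i := add_le_add h1 h2
        _ = (CV * γ + CV) * γ ^ i := by ring
    rw [hsummable.hasSum_iff_tendsto_nat]
    have hpartial : ∀ n, ∑ i ∈ Finset.range n, (F π' (i + 1) - F π' i) = F π' n - F π' 0 :=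
      fun n => Finset.sum_range_sub (F π') n
    simp only [hpartial]
    exact (hFtend π' hπ').sub_const (F π' 0)
  have hF0 : F π' 0 = F π 0 := rfl
  -- assemble
  have hRsumπ' : Summable (R π') := hRsummable π' hπ'
  have hAdvSum : HasSum Adv (eta γ P r μ π' + (0 - F π' 0)) := by
    have h1 : HasSum (R π') (eta γ P r μ π') := by
      have : eta γ P r μ π' = ∑' i, R π' i := rfl
      rw [this]
      exact hRsumπ'.hasSum
    have := h1.add htele
    refine this.congr_fun fun i => ?_
    rw [hadvrec i]; ring
  rw [hEtaπ, hAdvSum.tsum_eq, ← hF0]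
  ring


end
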